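/- In a free group F of rank 2 with basis {a, b}, every automorphism of F maps the commutator [a,b] to a conjugate of [a,b] or of [a,b]⁻¹. -/

import Mathlib

open scoped commutatorElement

namespace Nielsen
open FreeGroup List

abbrev Lt := (Fin 2) × Bool

def NC (x y : Lt) : Prop := ¬(x.1 = y.1 ∧ x.2 = !y.2)

instance : DecidablePred (fun p : Lt × Lt => NC p.1 p.2) := fun _ => by unfold NC; infer_instance

def Reduced (L : List Lt) : Prop := FreeGroup.reduce L = L

theorem reduced_iff_chain {L : List Lt} : Reduced L ↔ List.IsChain NC L := by
  induction L with
  | nil => simp [Reduced, List.isChain_nil]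
  | cons x L ih =>
    constructor
    · intro h
      rw [Reduced, reduce.cons] at h
      rcases hL : reduce L with _ | ⟨y, t⟩
      · rw [hL] at h
        simp only [List.casesOn] at h
        have : L = [] := by injection h with _ h2; exact h2.symm
        simp [this, List.isChain_singleton]
      · rw [hL] at h
        change (if x.1 = y.1 ∧ x.2 = !y.2 then t else x :: y :: t) = x :: L at h
        by_cases hc : x.1 = y.1 ∧ x.2 = !y.2
        · rw [if_pos hc] at h
          exfalso
          have h1 : t.length = L.length + 1 := by
            have := congrArg List.length h; simpa using this
          have h2 : t.length + 1 = (reduce L).length := by rw [hL]; simp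
          have h3 : (reduce L).length ≤ L.length :=
            (FreeGroup.Red.length_le (FreeGroup.reduce.red (L := L)))
          omega
        · rw [if_neg hc] at h
          have hL' : L = y :: t := by
            injection h with _ h2
            exact h2.symm
          subst hL'
          have : Reduced (y :: t) := by rw [Reduced, hL]
          rw [List.isChain_cons_cons]
          exact ⟨hc, ih.1 this⟩
    · intro h
      rcases L with _ | ⟨y, t⟩
      · rfl
      · rw [List.isChain_cons_cons] at h
        have hred : Reduced (y :: t) := ih.2 h.2
        rw [Reduced, reduce.cons, hred]
        change (if x.1 = y.1 ∧ x.2 = !y.2 then t else x :: y :: t) = x :: y :: t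
        exact if_neg h.1

theorem Reduced.append_left {L₁ L₂ : List Lt} (h : Reduced (L₁ ++ L₂)) : Reduced L₁ := by
  rw [reduced_iff_chain] at *
  exact (List.isChain_append.1 h).1

theorem Reduced.append_right {L₁ L₂ : List Lt} (h : Reduced (L₁ ++ L₂)) : Reduced L₂ := by
  rw [reduced_iff_chain] at *
  exact (List.isChain_append.1 h).2.1

theorem reduced_toWord (x : FreeGroup (Fin 2)) : Reduced x.toWord := FreeGroup.reduce_toWord x

end Nielsen

namespace Nielsen
open FreeGroup List

theorem invRev_concat (m : List Lt) (x : Lt) :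
    invRev (m ++ [x]) = (x.1, !x.2) :: invRev m := by
  simp [invRev]

theorem mk_decomp_eq {w₁ w₂ p m q : List Lt} (h1 : w₁ = p ++ m) (h2 : w₂ = invRev m ++ q) :
    FreeGroup.mk w₁ * FreeGroup.mk w₂ = FreeGroup.mk (p ++ q) := by
  subst h1 h2
  rw [← mul_mk, ← mul_mk, ← mul_mk, ← inv_mk, mul_assoc]
  group

theorem exists_decomp_aux : ∀ (n : ℕ) (w₁ w₂ : List Lt), w₁.length ≤ n →
    Reduced w₁ → Reduced w₂ →
    ∃ p m q, w₁ = p ++ m ∧ w₂ = invRev m ++ q ∧ Reduced (p ++ q) := by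
  intro n
  induction n with
  | zero =>
    intro w₁ w₂ hlen h1 h2
    have : w₁ = [] := List.eq_nil_of_length_eq_zero (Nat.le_zero.1 hlen)
    exact ⟨[], [], w₂, by simp [this], by simp [invRev], by simpa using h2⟩
  | succ n ih =>
    intro w₁ w₂ hlen h1 h2
    rcases List.eq_nil_or_concat w₁ with rfl | ⟨t, x, rfl⟩
    · exact ⟨[], [], w₂, by simp, by simp [invRev], by simpa using h2⟩
    · rw [List.concat_eq_append] at h1 hlen
      rcases w₂ with _ | ⟨y, s⟩
      · exact ⟨t ++ [x], [], [], by simp, by simp [invRev], by simpa using h1⟩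
      by_cases hc : x.1 = y.1 ∧ x.2 = !y.2
      · -- cancellation at the junction
        have hy : y = (x.1, !x.2) := by
          obtain ⟨h1', h2'⟩ := hc
          cases y; cases x
          simp_all
        have ht : Reduced t := Reduced.append_left h1
        have hs : Reduced s := by
          have : Reduced ([y] ++ s) := h2
          exact this.append_right
        have hlen' : t.length ≤ n := by
          have := hlen; simp at this; omega
        obtain ⟨p, m, q, e1, e2, e3⟩ := ih t s hlen' ht hs
        refine ⟨p, m ++ [x], q, by simp [e1], ?_, e3⟩
        rw [invRev_concat, hy, e2]
        simp
      · -- no cancellation: the concatenation is already reduced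
        refine ⟨t ++ [x], [], y :: s, by simp, by simp [invRev], ?_⟩
        rw [reduced_iff_chain] at h1 h2 ⊢
        rw [List.isChain_append]
        refine ⟨h1, h2, ?_⟩
        intro a ha b hb
        simp at ha hb
        subst ha; subst hb
        exact hc

theorem exists_decomp (w₁ w₂ : List Lt) (h1 : Reduced w₁) (h2 : Reduced w₂) :
    ∃ p m q, w₁ = p ++ m ∧ w₂ = invRev m ++ q ∧ Reduced (p ++ q) :=
  exists_decomp_aux w₁.length w₁ w₂ le_rfl h1 h2

theorem toWord_eq_of_reduced {L : List Lt} (h : Reduced L) : (FreeGroup.mk L).toWord = L := by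
  rw [toWord_mk]; exact h

/-- Main cancellation decomposition at the group level. -/
theorem mul_decomp (x y : FreeGroup (Fin 2)) :
    ∃ p m q, x.toWord = p ++ m ∧ y.toWord = invRev m ++ q ∧ (x * y).toWord = p ++ q := by
  obtain ⟨p, m, q, e1, e2, e3⟩ := exists_decomp x.toWord y.toWord (reduced_toWord x) (reduced_toWord y)
  refine ⟨p, m, q, e1, e2, ?_⟩
  have : x * y = FreeGroup.mk (p ++ q) := by
    rw [← mk_toWord (x := x), ← mk_toWord (x := y)]
    exact mk_decomp_eq e1 e2
  rw [this, toWord_eq_of_reduced e3]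

theorem norm_eq_length (x : FreeGroup (Fin 2)) : x.norm = x.toWord.length := rfl
end Nielsen

namespace Nielsen
open FreeGroup List

def inv1 (z : Lt) : Lt := (z.1, !z.2)

theorem invRev_append (A B : List Lt) : invRev (A ++ B) = invRev B ++ invRev A := by
  simp [invRev]

theorem invRev_cons (z : Lt) (t : List Lt) : invRev (z :: t) = invRev t ++ [inv1 z] := by
  simp [invRev, inv1]

theorem invRev_singleton (z : Lt) : invRev [z] = [inv1 z] := by simp [invRev, inv1]

theorem not_NC_inv1 (z : Lt) : ¬ NC (inv1 z) z := by
  simp [NC, inv1]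

theorem not_NC_inv1' (z : Lt) : ¬ NC z (inv1 z) := by
  simp [NC, inv1]

theorem palindrome_nil : ∀ (n : ℕ) (r : List Lt), r.length ≤ n → Reduced r → invRev r = r → r = [] := by
  intro n
  induction n with
  | zero => intro r h _ _; exact List.eq_nil_of_length_eq_zero (Nat.le_zero.1 h)
  | succ n ih =>
    intro r hlen hred hpal
    rcases r with _ | ⟨z, t⟩
    · rfl
    rcases List.eq_nil_or_concat t with rfl | ⟨t', w, rfl⟩
    · exfalso
      rw [invRev_cons] at hpal
      simp [inv1] at hpal
      have := congrArg Prod.snd hpal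
      simp at this
    · exfalso
      rw [List.concat_eq_append] at *
      rw [invRev_cons] at hpal
      have e : invRev (t' ++ [w]) ++ [inv1 z] = (z :: t') ++ [w] := by
        rw [hpal]; simp
      have hw : w = inv1 z ∧ invRev (t' ++ [w]) = z :: t' := by
        have := List.append_inj' e (by simp)
        exact ⟨by simpa using this.2.symm, this.1⟩
      obtain ⟨rfl, h2⟩ := hw
      rw [invRev_append, invRev_singleton] at h2
      have hz : inv1 (inv1 z) = z := by simp [inv1]
      rw [hz] at h2
      have h3 : invRev t' = t' := by
        have h2' : [z] ++ invRev t' = [z] ++ t' := by simpa using h2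
        exact (List.append_cancel_left h2')
      have ht' : Reduced t' := by
        have h4 : Reduced ((z :: t') ++ [inv1 z]) := hred
        have := h4.append_left
        have : Reduced ([z] ++ t') := this
        exact this.append_right
      have hlen' : t'.length ≤ n := by
        have := hlen; simp at this; omega
      have := ih t' hlen' ht' h3
      subst this
      -- r = [z, inv1 z] is not reduced
      rw [reduced_iff_chain] at hred
      simp only [List.nil_append] at hred
      rw [List.isChain_cons_cons] at hred
      exact (not_NC_inv1' z) hred.1

end Nielsen

namespace Nielsen
open FreeGroup List

theorem not_reduced_invRev_append_self {m : List Lt} (hm : m ≠ []) :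
    ¬ Reduced (invRev m ++ m) := by
  rcases m with _ | ⟨z, t⟩
  · exact absurd rfl hm
  intro h
  rw [reduced_iff_chain, invRev_cons] at h
  have := (List.isChain_append.1 h).2.2
  have hnc : NC (inv1 z) z := by
    apply this
    · simp
    · simp
  exact not_NC_inv1 z hnc

theorem norm_lt_norm_sq (y : FreeGroup (Fin 2)) (hy : y ≠ 1) : y.norm < (y * y).norm := by
  obtain ⟨p, m, q, e1, e2, e3⟩ := mul_decomp y y
  have h1 : p.length + m.length = y.norm := by
    rw [norm_eq_length, e1]; simp
  have h2 : m.length + q.length = y.norm := by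
    rw [norm_eq_length, e2]; simp
  have h3 : (y * y).norm = p.length + q.length := by
    rw [norm_eq_length, e3]; simp
  have hn1 : 1 ≤ y.norm := by
    rcases Nat.eq_zero_or_pos y.norm with h | h
    · exact absurd (norm_eq_zero.1 h) hy
    · exact h
  by_contra hcon
  push_neg at hcon
  -- so m.length ≥ p.length
  have hge : p.length ≤ m.length := by omega
  have hpre1 : p <+: y.toWord := ⟨m, e1.symm⟩
  have hpre2 : invRev m <+: y.toWord := ⟨q, e2.symm⟩
  obtain ⟨r, hr⟩ := List.prefix_of_prefix_length_le hpre1 hpre2 (by simpa using hge)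
  have hm : m = r ++ q := by
    apply List.append_cancel_left (as := p)
    rw [← e1, ← List.append_assoc, hr, ← e2]
  have hkey : invRev q ++ invRev r = p ++ r := by
    rw [← invRev_append, ← hm, ← hr]
  have hinj := List.append_inj' hkey (by simp)
  have hredm : Reduced m := by
    have := reduced_toWord y
    rw [e1] at this
    exact this.append_right
  have hredr : Reduced r := by
    rw [hm] at hredm
    exact hredm.append_left
  have hrnil : r = [] := palindrome_nil r.length r le_rfl hredr hinj.2
  subst hrnil
  have hq : m = q := by simpa using hm
  subst hq
  have hne : m ≠ [] := by
    intro h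
    rw [h] at h2
    simp at h2
    omega
  have hredw : Reduced (invRev m ++ m) := by
    rw [← e2]; exact reduced_toWord y
  exact not_reduced_invRev_append_self hne hredw

end Nielsen

namespace Nielsen
open FreeGroup List Subgroup

theorem suffix_of_suffix_length_le {l₁ l₂ l : List Lt} (h1 : l₁ <:+ l) (h2 : l₂ <:+ l)
    (hl : l₁.length ≤ l₂.length) : l₁ <:+ l₂ := by
  rw [← List.reverse_prefix] at h1 h2 ⊢
  exact List.prefix_of_prefix_length_le h1 h2 (by simpa using hl)

/-! ### Weights -/

def enc (z : Lt) : ℕ := 2 * z.1.val + (cond z.2 1 0)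

theorem enc_lt (z : Lt) : enc z < 4 := by
  rcases z with ⟨i, b⟩
  fin_cases i <;> cases b <;> simp [enc]

theorem enc_inj {z z' : Lt} (h : enc z = enc z') : z = z' := by
  revert h
  rcases z with ⟨i, b⟩; rcases z' with ⟨i', b'⟩
  fin_cases i <;> fin_cases i' <;> cases b <;> cases b' <;> simp [enc]

def W (L : List Lt) : ℕ := L.foldl (fun n z => 4 * n + enc z) 0

theorem W_foldl (B : List Lt) : ∀ n : ℕ, B.foldl (fun n z => 4 * n + enc z) n = n * 4 ^ B.length + W B := by
  induction B with
  | nil => intro n; simp [W]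
  | cons z B ih =>
    intro n
    show B.foldl _ (4 * n + enc z) = _
    rw [ih (4 * n + enc z)]
    have hW : W (z :: B) = enc z * 4 ^ B.length + W B := by
      show B.foldl _ (4 * 0 + enc z) = _
      rw [ih (4 * 0 + enc z)]
      ring
    rw [hW]
    simp [List.length_cons, pow_succ]
    ring

theorem W_cons (z : Lt) (B : List Lt) : W (z :: B) = enc z * 4 ^ B.length + W B := by
  show B.foldl _ (4 * 0 + enc z) = _
  rw [W_foldl]
  ring

theorem W_append (A B : List Lt) : W (A ++ B) = W A * 4 ^ B.length + W B := by
  rw [W, List.foldl_append, W_foldl]; rfl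

theorem W_lt (B : List Lt) : W B < 4 ^ B.length := by
  induction B with
  | nil => simp [W]
  | cons z B ih =>
    rw [W_cons]
    have := enc_lt z
    have h4 : (enc z + 1) * 4 ^ B.length ≤ 4 * 4 ^ B.length := by
      apply Nat.mul_le_mul_right
      omega
    calc enc z * 4 ^ B.length + W B < enc z * 4 ^ B.length + 4 ^ B.length := by omega
    _ = (enc z + 1) * 4 ^ B.length := by ring
    _ ≤ 4 * 4 ^ B.length := h4
    _ = 4 ^ (z :: B).length := by rw [List.length_cons, pow_succ]; ring

theorem W_inj : ∀ (A B : List Lt), A.length = B.length → W A = W B → A = B := by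
  intro A
  induction A with
  | nil => intro B h _; exact (List.eq_nil_of_length_eq_zero h.symm).symm
  | cons a A ih =>
    intro B hlen hW
    rcases B with _ | ⟨b, B⟩
    · simp at hlen
    have hl : A.length = B.length := by simpa using hlen
    rw [W_cons, W_cons, hl] at hW
    have hWA := W_lt A
    have hWB := W_lt B
    rw [hl] at hWA
    have hab : enc a = enc b := by
      by_contra hne
      rcases Nat.lt_or_ge (enc a) (enc b) with h | h
      · have : enc a * 4 ^ B.length + W A < enc b * 4 ^ B.length + W B := by
          calc enc a * 4 ^ B.length + W A < enc a * 4 ^ B.length + 4 ^ B.length := by omega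
          _ = (enc a + 1) * 4 ^ B.length := by ring
          _ ≤ enc b * 4 ^ B.length := Nat.mul_le_mul_right _ (by omega)
          _ ≤ enc b * 4 ^ B.length + W B := Nat.le_add_right _ _
        omega
      · have h' : enc b < enc a := by omega
        have : enc b * 4 ^ B.length + W B < enc a * 4 ^ B.length + W A := by
          calc enc b * 4 ^ B.length + W B < enc b * 4 ^ B.length + 4 ^ B.length := by omega
          _ = (enc b + 1) * 4 ^ B.length := by ring
          _ ≤ enc a * 4 ^ B.length := Nat.mul_le_mul_right _ (by omega)
          _ ≤ enc a * 4 ^ B.length + W A := Nat.le_add_right _ _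
        omega
    have hA : W A = W B := by
      rw [hab] at hW
      omega
    rw [enc_inj hab, ih B hl hA]

/-- inversion-invariant weight of a free group element -/
def wt (g : FreeGroup (Fin 2)) : ℕ := W g.toWord + W g⁻¹.toWord

theorem wt_inv (g : FreeGroup (Fin 2)) : wt g⁻¹ = wt g := by
  simp [wt]
  omega

end Nielsen

namespace Nielsen
open FreeGroup List Subgroup

abbrev F2 := FreeGroup (Fin 2)

def cw : F2 := ⁅FreeGroup.of (0 : Fin 2), FreeGroup.of (1 : Fin 2)⁆

/-- The target property: conjugate to the standard commutator or its inverse. -/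
def Good (w : F2) : Prop := IsConj cw w ∨ IsConj cw⁻¹ w

theorem good_conj {w : F2} (g : F2) (h : Good w) : Good (g * w * g⁻¹) := by
  rcases h with h | h
  · exact Or.inl (h.trans (isConj_iff.2 ⟨g, rfl⟩))
  · exact Or.inr (h.trans (isConj_iff.2 ⟨g, rfl⟩))

theorem good_unconj {w : F2} (g : F2) (h : Good (g * w * g⁻¹)) : Good w := by
  have := good_conj g⁻¹ h
  simpa [mul_assoc] using this

theorem good_inv {w : F2} (h : Good w) : Good w⁻¹ := by
  rcases h with h | h
  · right
    obtain ⟨c, hc⟩ := isConj_iff.1 h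
    exact isConj_iff.2 ⟨c, by rw [← hc]; group⟩
  · left
    obtain ⟨c, hc⟩ := isConj_iff.1 h
    refine isConj_iff.2 ⟨c, ?_⟩
    have : w = (c * cw⁻¹ * c⁻¹)⁻¹⁻¹ := by rw [hc]; group
    rw [this]; group

theorem good_comm_swap {u v : F2} (h : Good ⁅v, u⁆) : Good ⁅u, v⁆ := by
  have := good_inv h
  rw [commutatorElement_inv] at this
  exact this

/-- the four elementary replacements of the second generator -/
def VMove (u v w : F2) : Prop := w = v * u ∨ w = v * u⁻¹ ∨ w = u * v ∨ w = u⁻¹ * v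

theorem vmove_good {u v w : F2} (hw : VMove u v w) (h : Good ⁅u, w⁆) : Good ⁅u, v⁆ := by
  rcases hw with rfl | rfl | rfl | rfl
  · have e : ⁅u, v * u⁆ = ⁅u, v⁆ := by group
    rwa [e] at h
  · have e : ⁅u, v * u⁻¹⁆ = ⁅u, v⁆ := by group
    rwa [e] at h
  · have e : ⁅u, u * v⁆ = u * ⁅u, v⁆ * u⁻¹ := by group
    rw [e] at h
    exact good_unconj u h
  · have e : ⁅u, u⁻¹ * v⁆ = u⁻¹ * ⁅u, v⁆ * u⁻¹⁻¹ := by group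
    rw [e] at h
    exact good_unconj u⁻¹ h

theorem closure_pair_congr {u v w : F2} (h1 : w ∈ Subgroup.closure ({u, v} : Set F2))
    (h2 : v ∈ Subgroup.closure ({u, w} : Set F2)) :
    Subgroup.closure ({u, w} : Set F2) = Subgroup.closure {u, v} := by
  apply _root_.le_antisymm
  · rw [closure_le]
    rintro x (rfl | rfl)
    · exact subset_closure (by simp)
    · exact h1
  · rw [closure_le]
    rintro x (rfl | rfl)
    · exact subset_closure (by simp)
    · exact h2

theorem vmove_closure {u v w : F2} (hw : VMove u v w) :
    Subgroup.closure {u, w} = Subgroup.closure {u, v} := by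
  have hu2 : u ∈ Subgroup.closure ({u, v} : Set F2) := subset_closure (by simp)
  have hv2 : v ∈ Subgroup.closure ({u, v} : Set F2) := subset_closure (by simp)
  rcases hw with rfl | rfl | rfl | rfl
  · refine closure_pair_congr (mul_mem hv2 hu2) ?_
    have hu1 : u ∈ Subgroup.closure ({u, v * u} : Set F2) := subset_closure (by simp)
    have hw1 : v * u ∈ Subgroup.closure ({u, v * u} : Set F2) := subset_closure (by simp)
    simpa using mul_mem hw1 (inv_mem hu1)
  · refine closure_pair_congr (mul_mem hv2 (inv_mem hu2)) ?_
    have hu1 : u ∈ Subgroup.closure ({u, v * u⁻¹} : Set F2) := subset_closure (by simp)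
    have hw1 : v * u⁻¹ ∈ Subgroup.closure ({u, v * u⁻¹} : Set F2) := subset_closure (by simp)
    simpa using mul_mem hw1 hu1
  · refine closure_pair_congr (mul_mem hu2 hv2) ?_
    have hu1 : u ∈ Subgroup.closure ({u, u * v} : Set F2) := subset_closure (by simp)
    have hw1 : u * v ∈ Subgroup.closure ({u, u * v} : Set F2) := subset_closure (by simp)
    simpa using mul_mem (inv_mem hu1) hw1
  · refine closure_pair_congr (mul_mem (inv_mem hu2) hv2) ?_
    have hu1 : u ∈ Subgroup.closure ({u, u⁻¹ * v} : Set F2) := subset_closure (by simp)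
    have hw1 : u⁻¹ * v ∈ Subgroup.closure ({u, u⁻¹ * v} : Set F2) := subset_closure (by simp)
    simpa using mul_mem hu1 hw1

theorem closure_pair_swap (u v : F2) :
    Subgroup.closure ({v, u} : Set F2) = Subgroup.closure {u, v} := by
  rw [Set.pair_comm]

end Nielsen

namespace Nielsen
open FreeGroup List Subgroup

def gen2 (u v : F2) (i : Fin 2) : F2 := if i = 0 then u else v

def lmap (u v : F2) (z : Lt) : F2 := cond z.2 (gen2 u v z.1) (gen2 u v z.1)⁻¹

def Dd (x y : F2) : ℕ := x.norm + y.norm - (x * y).norm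

theorem lmap_ne_one {u v : F2} (hu : u ≠ 1) (hv : v ≠ 1) (z : Lt) : lmap u v z ≠ 1 := by
  rcases z with ⟨i, b⟩
  cases b <;> simp [lmap, gen2] <;> split <;> simp_all

theorem lmap_mk {u v : F2} (z : Lt) : FreeGroup.lift (gen2 u v) (FreeGroup.mk [z]) = lmap u v z := by
  rcases z with ⟨i, b⟩
  cases b
  · have h1 : FreeGroup.mk [(i, false)] = (FreeGroup.of i)⁻¹ := by
      rw [show FreeGroup.of i = FreeGroup.mk [(i, true)] from rfl, inv_mk]
      simp [invRev]
    rw [h1]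
    have h2 : (FreeGroup.lift (gen2 u v)) (FreeGroup.of i)⁻¹
        = ((FreeGroup.lift (gen2 u v)) (FreeGroup.of i))⁻¹ := map_inv _ _
    rw [h2, FreeGroup.lift_apply_of]
    rfl
  · rw [show FreeGroup.mk [(i, true)] = FreeGroup.of i from rfl, FreeGroup.lift_apply_of]
    rfl

theorem norm_lmap_pos {u v : F2} (hu : u ≠ 1) (hv : v ≠ 1) (z : Lt) : 1 ≤ (lmap u v z).norm := by
  rcases Nat.eq_zero_or_pos (lmap u v z).norm with h | h
  · exact absurd (norm_eq_zero.1 h) (lmap_ne_one hu hv z)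
  · exact h

theorem self_Dd {y : F2} (hy : y ≠ 1) : Dd y y < y.norm := by
  have h1 := norm_lt_norm_sq y hy
  have h2 := FreeGroup.norm_mul_le y y
  unfold Dd
  omega

theorem NC_same_base {z z' : Lt} (h : NC z z') (hb : z.1 = z'.1) : z = z' := by
  rcases z with ⟨i, b⟩; rcases z' with ⟨i', b'⟩
  simp at hb
  subst hb
  simp [NC] at h
  cases b <;> cases b' <;> simp_all

theorem NC_self (z : Lt) : NC z z := by
  simp [NC]

section Survival

variable {u v : F2} (hu : u ≠ 1) (hv : v ≠ 1)
variable (Hmix : ∀ z z' : Lt, z.1 ≠ z'.1 →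
    max (lmap u v z).norm (lmap u v z').norm ≤ ((lmap u v z) * (lmap u v z')).norm)
variable (HH : ∀ z z' z'' : Lt, z.1 ≠ z'.1 → z''.1 ≠ z'.1 →
    Dd (lmap u v z) (lmap u v z') + Dd (lmap u v z') (lmap u v z'') < 2 * (lmap u v z').norm)

include hu hv Hmix in
theorem mixed_Dd {z z' : Lt} (hb : z.1 ≠ z'.1) :
    Dd (lmap u v z) (lmap u v z') ≤ min (lmap u v z).norm (lmap u v z').norm := by
  have h1 := Hmix z z' hb
  have h2 := FreeGroup.norm_mul_le (lmap u v z) (lmap u v z')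
  have hle1 : (lmap u v z).norm ≤ ((lmap u v z) * (lmap u v z')).norm :=
    le_trans (le_max_left _ _) h1
  have hle2 : (lmap u v z').norm ≤ ((lmap u v z) * (lmap u v z')).norm :=
    le_trans (le_max_right _ _) h1
  unfold Dd
  rw [Nat.le_min]
  constructor <;> omega

include hu hv Hmix HH in
theorem triple_bound {z z' z'' : Lt} (h1 : NC z z') (h2 : NC z' z'') :
    Dd (lmap u v z) (lmap u v z') + Dd (lmap u v z') (lmap u v z'') < 2 * (lmap u v z').norm := by
  by_cases hb1 : z.1 = z'.1
  · have hz : z = z' := NC_same_base h1 hb1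
    subst hz
    have hs := self_Dd (lmap_ne_one hu hv z)
    by_cases hb2 : z''.1 = z.1
    · have : z'' = z := (NC_same_base h2 hb2.symm ▸ rfl : z = z'') ▸ rfl
      have hz2 : z'' = z := by
        have := NC_same_base h2 hb2.symm
        exact this.symm
      rw [hz2]
      omega
    · have hm := mixed_Dd hu hv Hmix (z := z) (z' := z'') (by exact fun hh => hb2 hh.symm)
      have := Nat.min_le_left (lmap u v z).norm (lmap u v z'').norm
      omega
  · by_cases hb2 : z''.1 = z'.1
    · have hz2 : z'' = z' := NC_same_base h2 hb2.symm |>.symm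
      subst hz2
      have hs := self_Dd (lmap_ne_one hu hv z'')
      have hm := mixed_Dd hu hv Hmix (z := z) (z' := z'') hb1
      have := Nat.min_le_right (lmap u v z).norm (lmap u v z'').norm
      omega
    · exact HH z z' z'' hb1 hb2

include hu hv Hmix HH in
theorem survival_aux : ∀ (n : ℕ) (L : List Lt) (z : Lt), (L ++ [z]).length ≤ n →
    Reduced (L ++ [z]) →
    ∃ A R, (FreeGroup.lift (gen2 u v) (FreeGroup.mk (L ++ [z]))).toWord = A ++ R ∧ R ≠ [] ∧
      R <:+ (lmap u v z).toWord ∧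
      (∀ z' : Lt, NC z z' → Dd (lmap u v z) (lmap u v z') < 2 * R.length) ∧
      L.length ≤ A.length := by
  intro n
  induction n with
  | zero => intro L z h _; simp at h
  | succ n ih =>
    intro L z hlen hred
    rcases List.eq_nil_or_concat L with rfl | ⟨L', z₀, rfl⟩
    · -- base case: a single letter
      refine ⟨[], (lmap u v z).toWord, ?_, ?_, suffix_rfl, ?_, by simp⟩
      · show toWord ((FreeGroup.lift (gen2 u v)) (FreeGroup.mk [z])) = [] ++ toWord (lmap u v z)
        rw [lmap_mk]; simp
      · rw [Ne, toWord_eq_nil_iff]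
        exact lmap_ne_one hu hv z
      · intro z' hnc
        rw [← norm_eq_length]
        have hp := norm_lmap_pos hu hv z
        by_cases hb : z.1 = z'.1
        · have heq : z' = z := (NC_same_base hnc hb).symm
          rw [heq]
          have := self_Dd (lmap_ne_one hu hv z)
          omega
        · have := mixed_Dd hu hv Hmix (z := z) (z' := z') hb
          have h2 := Nat.min_le_left (lmap u v z).norm (lmap u v z').norm
          omega
    · -- inductive step
      rw [List.concat_eq_append] at hlen hred ⊢
      have hred' : Reduced (L' ++ [z₀]) := hred.append_left
      have hlen' : (L' ++ [z₀]).length ≤ n := by simp at hlen ⊢; omega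
      obtain ⟨A, R, hAR, hRne, hRsuf, hcond, hAlen⟩ := ih (L') z₀ hlen' hred'
      have hNCz : NC z₀ z := by
        rw [reduced_iff_chain] at hred
        have := (List.isChain_append.1 hred).2.2
        apply this <;> simp
      set P' := FreeGroup.lift (gen2 u v) (FreeGroup.mk (L' ++ [z₀])) with hP'
      set y := lmap u v z with hy
      have hsplit : FreeGroup.lift (gen2 u v) (FreeGroup.mk (L' ++ [z₀] ++ [z])) = P' * y := by
        rw [← FreeGroup.mul_mk, _root_.map_mul, lmap_mk]
      obtain ⟨p, m, q, e1, e2, e3⟩ := mul_decomp P' y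
      -- cancellation stays within R
      have hmR : m.length < R.length := by
        by_contra hcon
        push_neg at hcon
        have hmsuf : m <:+ P'.toWord := ⟨p, e1.symm⟩
        have hRsuf' : R <:+ P'.toWord := ⟨A, hAR.symm⟩
        obtain ⟨m₁, hm₁⟩ := suffix_of_suffix_length_le hRsuf' hmsuf hcon
        -- m = m₁ ++ R
        obtain ⟨S, hS⟩ := hRsuf
        have hyw : y.toWord = invRev R ++ (invRev m₁ ++ q) := by
          rw [e2, ← hm₁, invRev_append, List.append_assoc]
        have hprod : (lmap u v z₀) * y = FreeGroup.mk (S ++ (invRev m₁ ++ q)) := by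
          rw [← mk_toWord (x := lmap u v z₀), ← mk_toWord (x := y)]
          exact mk_decomp_eq hS.symm hyw
        have hnle : ((lmap u v z₀) * y).norm ≤ S.length + (invRev m₁ ++ q).length := by
          rw [hprod]
          calc (FreeGroup.mk (S ++ (invRev m₁ ++ q))).norm ≤ (S ++ (invRev m₁ ++ q)).length :=
            norm_mk_le
          _ = S.length + (invRev m₁ ++ q).length := by simp
        have hn0 : (lmap u v z₀).norm = S.length + R.length := by
          rw [norm_eq_length, ← hS]; simp
        have hny : y.norm = R.length + (invRev m₁ ++ q).length := by
          rw [norm_eq_length, hyw]; simp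
        have hDge : 2 * R.length ≤ Dd (lmap u v z₀) y := by
          unfold Dd
          omega
        have := hcond z hNCz
        rw [← hy] at this
        omega
      -- m is a suffix of R
      have hmsuf : m <:+ P'.toWord := ⟨p, e1.symm⟩
      have hRsuf' : R <:+ P'.toWord := ⟨A, hAR.symm⟩
      obtain ⟨R₁, hR₁⟩ := suffix_of_suffix_length_le hmsuf hRsuf' (le_of_lt hmR)
      -- R = R₁ ++ m
      have hR₁ne : R₁ ≠ [] := by
        intro h
        rw [h] at hR₁
        simp at hR₁
        rw [hR₁] at hmR
        omega
      -- Dd (lmap z₀) y ≥ 2 |m|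
      have hmsufz₀ : m <:+ (lmap u v z₀).toWord := by
        apply List.IsSuffix.trans _ hRsuf
        exact ⟨R₁, hR₁⟩
      obtain ⟨S', hS'⟩ := hmsufz₀
      have hprod : (lmap u v z₀) * y = FreeGroup.mk (S' ++ q) := by
        rw [← mk_toWord (x := lmap u v z₀), ← mk_toWord (x := y)]
        exact mk_decomp_eq hS'.symm e2
      have hnle : ((lmap u v z₀) * y).norm ≤ S'.length + q.length := by
        rw [hprod]
        calc (FreeGroup.mk (S' ++ q)).norm ≤ (S' ++ q).length := norm_mk_le
        _ = S'.length + q.length := by simp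
      have hn0 : (lmap u v z₀).norm = S'.length + m.length := by
        rw [norm_eq_length, ← hS']; simp
      have hny : y.norm = m.length + q.length := by
        rw [norm_eq_length, e2]; simp
      have hDge : 2 * m.length ≤ Dd (lmap u v z₀) y := by
        unfold Dd
        omega
      -- conclude
      have hcond' : ∀ z' : Lt, NC z z' → Dd y (lmap u v z') < 2 * q.length := by
        intro z' hnc
        have htrip := triple_bound hu hv Hmix HH hNCz hnc
        rw [← hy] at htrip
        omega
      refine ⟨p, q, ?_, ?_, ⟨invRev m, e2.symm⟩, hcond', ?_⟩
      · rw [hsplit]; exact e3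
      · have := hcond' z (NC_self z)
        intro h
        rw [h] at this
        simp at this
      · -- p.length ≥ L'.length + 1
        have hPlen : P'.toWord.length = A.length + R.length := by rw [hAR]; simp
        have hPlen2 : P'.toWord.length = p.length + m.length := by rw [e1]; simp
        have hRlen : R.length = R₁.length + m.length := by rw [← hR₁]; simp
        have h1 : 1 ≤ R₁.length := by
          rcases R₁ with _ | _
          · exact absurd rfl hR₁ne
          · simp
        simp only [List.length_append, List.length_cons, List.length_nil]
        omega

include hu hv Hmix HH in
theorem survival (g : F2) : g.norm ≤ (FreeGroup.lift (gen2 u v) g).norm := by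
  by_cases hg : g = 1
  · subst hg; simp
  have hne : g.toWord ≠ [] := by
    rw [Ne, toWord_eq_nil_iff]; exact hg
  rcases List.eq_nil_or_concat g.toWord with h | ⟨L, z, hLz⟩
  · exact absurd h hne
  rw [List.concat_eq_append] at hLz
  obtain ⟨A, R, hAR, hRne, _, _, hAlen⟩ :=
    survival_aux hu hv Hmix HH (L ++ [z]).length L z le_rfl (hLz ▸ reduced_toWord g)
  have hgw : FreeGroup.lift (gen2 u v) g = FreeGroup.lift (gen2 u v) (FreeGroup.mk (L ++ [z])) := by
    rw [← hLz, mk_toWord]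
  rw [hgw, norm_eq_length ((FreeGroup.lift (gen2 u v)) (FreeGroup.mk (L ++ [z]))), hAR]
  have h1 : 1 ≤ R.length := by
    rcases R with _ | _
    · exact absurd rfl hRne
    · simp
  have h2 : g.norm = L.length + 1 := by
    rw [norm_eq_length, hLz]; simp
  simp only [List.length_append]
  omega

include hu hv Hmix HH in
theorem letter_of_norm_one {t : F2} (ht : t.norm = 1) (g : F2)
    (hg : FreeGroup.lift (gen2 u v) g = t) : ∃ z : Lt, lmap u v z = t := by
  have h1 : g.norm ≤ 1 := by
    have := survival hu hv Hmix HH g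
    rw [hg, ht] at this
    exact this
  have hgne : g ≠ 1 := by
    intro h
    subst h
    simp at hg
    rw [← hg] at ht
    simp [norm_eq_length] at ht
  have h2 : g.norm = 1 := by
    have h0 : g.norm ≠ 0 := fun h => hgne (norm_eq_zero.1 h)
    omega
  rw [norm_eq_length] at h2
  obtain ⟨z, hz⟩ := List.length_eq_one_iff.1 h2
  refine ⟨z, ?_⟩
  rw [← lmap_mk (u := u) (v := v) z, ← hz, mk_toWord, hg]

end Survival



end Nielsen

namespace Nielsen
open FreeGroup List Subgroup

theorem pow4_le {a b : ℕ} (h : a ≤ b) : (4:ℤ)^a ≤ 4^b := by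
  have := Nat.pow_le_pow_right (show 1 ≤ 4 by norm_num) h
  exact_mod_cast this

theorem pow4_pos (a : ℕ) : (0:ℤ) < 4^a := by positivity

/-- The exact-half configuration allows a weight-decreasing Nielsen move. -/
theorem exact_half_move {c d : F2} (hc : c ≠ 1)
    (y X Z : F2) (hy : y = c ∨ y = c⁻¹) (hX : X = d ∨ X = d⁻¹) (hZ : Z = d ∨ Z = d⁻¹)
    (hDX : Dd X y = y.norm) (hDZ : Dd y Z = y.norm)
    (hXn : y.norm ≤ X.norm) (hZn : y.norm ≤ Z.norm) :
    ∃ d', VMove c d d' ∧ d'.norm = d.norm ∧ wt d' < wt d := by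
  have hyne : y ≠ 1 := by
    rcases hy with rfl | rfl
    · exact hc
    · simpa using hc
  have hny1 : 1 ≤ y.norm := by
    rcases Nat.eq_zero_or_pos y.norm with h | h
    · exact absurd (norm_eq_zero.1 h) hyne
    · exact h
  obtain ⟨p, m, q, e1, e2, e3⟩ := mul_decomp X y
  obtain ⟨p₂, m₂, q₂, f1, f2, f3⟩ := mul_decomp y Z
  have hnX : X.norm = p.length + m.length := by rw [norm_eq_length, e1]; simp
  have hny : y.norm = m.length + q.length := by rw [norm_eq_length, e2]; simp
  have hnXy : (X * y).norm = p.length + q.length := by rw [norm_eq_length, e3]; simp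
  have hny2 : y.norm = p₂.length + m₂.length := by rw [norm_eq_length, f1]; simp
  have hnZ : Z.norm = m₂.length + q₂.length := by rw [norm_eq_length, f2]; simp
  have hnyZ : (y * Z).norm = p₂.length + q₂.length := by rw [norm_eq_length, f3]; simp
  have hmle : (X * y).norm ≤ X.norm + y.norm := FreeGroup.norm_mul_le X y
  have hmle2 : (y * Z).norm ≤ y.norm + Z.norm := FreeGroup.norm_mul_le y Z
  -- exact-half arithmetic
  have hk1 : q.length = m.length := by unfold Dd at hDX; omega
  have hk2 : p₂.length = m₂.length ∧ m₂.length = m.length := by unfold Dd at hDZ; omega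
  obtain ⟨hk2a, hk2b⟩ := hk2
  have hkpos : 1 ≤ m.length := by omega
  have hple : m.length ≤ p.length := by omega
  have hq2le : m.length ≤ q₂.length := by omega
  -- identify the two decompositions of y
  have hinj : p₂ = invRev m ∧ m₂ = q := by
    have h := e2.symm.trans f1
    have hl : (invRev m).length = p₂.length := by simp [hk2a, hk2b]
    exact ⟨(List.append_inj h hl).1.symm, (List.append_inj h hl).2.symm⟩
  obtain ⟨hp₂, hm₂⟩ := hinj
  -- m ≠ q
  have hmq : m ≠ q := by
    intro h
    have : y.toWord = invRev m ++ m := by rw [e2, ← h]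
    have hmne : m ≠ [] := by
      intro h'
      rw [h'] at hkpos
      simp at hkpos
    exact not_reduced_invRev_append_self hmne (this ▸ reduced_toWord y)
  -- weight equations (in ℕ)
  have hWX : wt X = W p * 4 ^ m.length + W m + (W (invRev m) * 4 ^ p.length + W (invRev p)) := by
    unfold wt
    rw [toWord_inv, e1, invRev_append, W_append, W_append, invRev_length]
  have hWXy : wt (X * y)
      = W p * 4 ^ q.length + W q + (W (invRev q) * 4 ^ p.length + W (invRev p)) := by
    unfold wt
    rw [toWord_inv, e3, invRev_append, W_append, W_append, invRev_length]
  have hWZ : wt Z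
      = W (invRev q) * 4 ^ q₂.length + W q₂ + (W (invRev q₂) * 4 ^ q.length + W q) := by
    unfold wt
    rw [toWord_inv, f2, hm₂, invRev_append, invRev_invRev, W_append, W_append]
  have hWyZ : wt (y * Z)
      = W (invRev m) * 4 ^ q₂.length + W q₂ + (W (invRev q₂) * 4 ^ m.length + W m) := by
    unfold wt
    rw [toWord_inv, f3, hp₂, invRev_append, invRev_invRev, W_append, W_append]
  have hs : W (invRev q) ≠ W (invRev m) := by
    intro h
    apply hmq
    apply invRev_injective
    exact (W_inj _ _ (by simp [hk1]) h).symm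
  have hQlt : (W q : ℤ) < 4 ^ m.length := by
    have := W_lt q
    rw [hk1] at this
    exact_mod_cast this
  have hMlt : (W m : ℤ) < 4 ^ m.length := by exact_mod_cast W_lt m
  have hM0 : (0:ℤ) ≤ (W m : ℤ) := by positivity
  have hQ0 : (0:ℤ) ≤ (W q : ℤ) := by positivity
  rcases Nat.lt_or_ge (W (invRev q)) (W (invRev m)) with hlt | hge
  · -- use the X-side move, wt (X*y) < wt X
    have hdec : wt (X * y) < wt X := by
      have hz : (wt (X*y) : ℤ) < (wt X : ℤ) := by
        rw [hWX, hWXy, hk1]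
        push_cast
        have h1 : (W (invRev q) : ℤ) + 1 ≤ W (invRev m) := by exact_mod_cast hlt
        have h2' : (W (invRev q) : ℤ) * 4^(p.length) + 4^(p.length)
            ≤ (W (invRev m) : ℤ) * 4^(p.length) := by
          calc (W (invRev q) : ℤ) * 4^(p.length) + 4^(p.length)
              = ((W (invRev q) : ℤ) + 1) * 4^(p.length) := by ring
          _ ≤ (W (invRev m) : ℤ) * 4^(p.length) :=
            mul_le_mul_of_nonneg_right h1 (le_of_lt (pow4_pos _))
        have h3 : (4:ℤ)^(m.length) ≤ 4^(p.length) := pow4_le hple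
        linarith
      exact_mod_cast hz
    have hnorm : (X * y).norm = X.norm := by omega
    rcases hX with hXd | hXd <;> rcases hy with hyc | hyc
    · refine ⟨d * c, Or.inl rfl, ?_, ?_⟩
      · rw [show d * c = X * y by rw [hXd, hyc], hnorm, hXd]
      · rw [show d * c = X * y by rw [hXd, hyc], ← hXd]
        exact hdec
    · refine ⟨d * c⁻¹, Or.inr (Or.inl rfl), ?_, ?_⟩
      · rw [show d * c⁻¹ = X * y by rw [hXd, hyc], hnorm, hXd]
      · rw [show d * c⁻¹ = X * y by rw [hXd, hyc], ← hXd]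
        exact hdec
    · refine ⟨c⁻¹ * d, Or.inr (Or.inr (Or.inr rfl)), ?_, ?_⟩
      · rw [show c⁻¹ * d = (X * y)⁻¹ by rw [hXd, hyc]; group, FreeGroup.norm_inv_eq, hnorm, hXd,
          FreeGroup.norm_inv_eq]
      · rw [show c⁻¹ * d = (X * y)⁻¹ by rw [hXd, hyc]; group, wt_inv, ← wt_inv d, ← hXd]
        exact hdec
    · refine ⟨c * d, Or.inr (Or.inr (Or.inl rfl)), ?_, ?_⟩
      · rw [show c * d = (X * y)⁻¹ by rw [hXd, hyc]; group, FreeGroup.norm_inv_eq, hnorm, hXd,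
          FreeGroup.norm_inv_eq]
      · rw [show c * d = (X * y)⁻¹ by rw [hXd, hyc]; group, wt_inv, ← wt_inv d, ← hXd]
        exact hdec
  · -- use the Z-side move, wt (y*Z) < wt Z
    have hlt' : W (invRev m) < W (invRev q) := by
      rcases Nat.lt_or_ge (W (invRev m)) (W (invRev q)) with h | h
      · exact h
      · omega
    have hdec : wt (y * Z) < wt Z := by
      have hz : (wt (y*Z) : ℤ) < (wt Z : ℤ) := by
        rw [hWZ, hWyZ, hk1]
        push_cast
        have h1 : (W (invRev m) : ℤ) + 1 ≤ W (invRev q) := by exact_mod_cast hlt'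
        have h2' : (W (invRev m) : ℤ) * 4^(q₂.length) + 4^(q₂.length)
            ≤ (W (invRev q) : ℤ) * 4^(q₂.length) := by
          calc (W (invRev m) : ℤ) * 4^(q₂.length) + 4^(q₂.length)
              = ((W (invRev m) : ℤ) + 1) * 4^(q₂.length) := by ring
          _ ≤ (W (invRev q) : ℤ) * 4^(q₂.length) :=
            mul_le_mul_of_nonneg_right h1 (le_of_lt (pow4_pos _))
        have h3 : (4:ℤ)^(m.length) ≤ 4^(q₂.length) := pow4_le hq2le
        linarith
      exact_mod_cast hz
    have hnorm : (y * Z).norm = Z.norm := by omega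
    rcases hZ with hZd | hZd <;> rcases hy with hyc | hyc
    · refine ⟨c * d, Or.inr (Or.inr (Or.inl rfl)), ?_, ?_⟩
      · rw [show c * d = y * Z by rw [hZd, hyc], hnorm, hZd]
      · rw [show c * d = y * Z by rw [hZd, hyc], ← hZd]
        exact hdec
    · refine ⟨c⁻¹ * d, Or.inr (Or.inr (Or.inr rfl)), ?_, ?_⟩
      · rw [show c⁻¹ * d = y * Z by rw [hZd, hyc], hnorm, hZd]
      · rw [show c⁻¹ * d = y * Z by rw [hZd, hyc], ← hZd]
        exact hdec
    · refine ⟨d * c⁻¹, Or.inr (Or.inl rfl), ?_, ?_⟩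
      · rw [show d * c⁻¹ = (y * Z)⁻¹ by rw [hZd, hyc]; group, FreeGroup.norm_inv_eq, hnorm, hZd,
          FreeGroup.norm_inv_eq]
      · rw [show d * c⁻¹ = (y * Z)⁻¹ by rw [hZd, hyc]; group, wt_inv, ← wt_inv d, ← hZd]
        exact hdec
    · refine ⟨d * c, Or.inl rfl, ?_, ?_⟩
      · rw [show d * c = (y * Z)⁻¹ by rw [hZd, hyc]; group, FreeGroup.norm_inv_eq, hnorm, hZd,
          FreeGroup.norm_inv_eq]
      · rw [show d * c = (y * Z)⁻¹ by rw [hZd, hyc]; group, wt_inv, ← wt_inv d, ← hZd]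
        exact hdec

end Nielsen

namespace Nielsen
open FreeGroup List Subgroup

theorem cw_ne_one : cw ≠ 1 := by
  intro h
  have := congrArg (FreeGroup.lift (fun i : Fin 2 => if i = 0 then Equiv.swap (0 : Fin 3) 1 else Equiv.swap 1 2)) h
  simp [cw] at this
  revert this; decide

theorem good_cw : Good cw := Or.inl (IsConj.refl cw)

theorem good_inv_left {u v : F2} (h : Good ⁅u, v⁆) : Good ⁅u⁻¹, v⁆ := by
  have e : ⁅u⁻¹, v⁆ = u⁻¹ * ⁅u, v⁆⁻¹ * u⁻¹⁻¹ := by group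
  rw [e]
  exact good_conj u⁻¹ (good_inv h)

theorem good_inv_right {u v : F2} (h : Good ⁅u, v⁆) : Good ⁅u, v⁻¹⁆ := by
  have e : ⁅u, v⁻¹⁆ = v⁻¹ * ⁅u, v⁆⁻¹ * v⁻¹⁻¹ := by group
  rw [e]
  exact good_conj v⁻¹ (good_inv h)

theorem base_good {u v : F2} (hu : u = FreeGroup.of 0 ∨ u = (FreeGroup.of 0)⁻¹)
    (hv : v = FreeGroup.of 1 ∨ v = (FreeGroup.of 1)⁻¹) : Good ⁅u, v⁆ := by
  have h0 : Good ⁅FreeGroup.of (0 : Fin 2), FreeGroup.of (1 : Fin 2)⁆ := good_cw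
  rcases hu with rfl | rfl <;> rcases hv with rfl | rfl
  · exact h0
  · exact good_inv_right h0
  · exact good_inv_left h0
  · exact good_inv_right (good_inv_left h0)

theorem cyclic_not_top (w : F2) : Subgroup.closure ({w} : Set F2) ≠ ⊤ := by
  intro h
  have ha : FreeGroup.of (0 : Fin 2) ∈ Subgroup.closure ({w} : Set F2) := h ▸ Subgroup.mem_top _
  have hb : FreeGroup.of (1 : Fin 2) ∈ Subgroup.closure ({w} : Set F2) := h ▸ Subgroup.mem_top _
  rw [Subgroup.mem_closure_singleton] at ha hb
  obtain ⟨n, hn⟩ := ha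
  obtain ⟨k, hk⟩ := hb
  have hcomm : Commute (FreeGroup.of (0 : Fin 2)) (FreeGroup.of (1 : Fin 2)) := by
    rw [← hn, ← hk]
    exact (Commute.refl w).zpow_zpow n k
  have : cw = 1 := commutatorElement_eq_one_iff_commute.2 hcomm
  exact cw_ne_one this

theorem closure_pair_one_left (v : F2) :
    Subgroup.closure ({(1 : F2), v} : Set F2) = Subgroup.closure {v} := by
  apply _root_.le_antisymm
  · rw [closure_le]
    rintro x (rfl | rfl)
    · exact one_mem _
    · exact subset_closure rfl
  · rw [closure_le]
    rintro x rfl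
    exact subset_closure (by simp)

theorem ne_one_of_closure {u v : F2} (hcl : Subgroup.closure ({u, v} : Set F2) = ⊤) :
    u ≠ 1 ∧ v ≠ 1 := by
  constructor
  · rintro rfl
    rw [closure_pair_one_left] at hcl
    exact cyclic_not_top v hcl
  · rintro rfl
    rw [Set.pair_comm, closure_pair_one_left] at hcl
    exact cyclic_not_top u hcl

theorem lmap_fst_zero {u v : F2} {z : Lt} (h : z.1 = 0) :
    lmap u v z = u ∨ lmap u v z = u⁻¹ := by
  rcases z with ⟨i, b⟩
  simp at h
  subst h
  cases b
  · right; simp [lmap, gen2]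
  · left; simp [lmap, gen2]

theorem lmap_fst_one {u v : F2} {z : Lt} (h : z.1 = 1) :
    lmap u v z = v ∨ lmap u v z = v⁻¹ := by
  rcases z with ⟨i, b⟩
  simp at h
  subst h
  cases b
  · right; simp [lmap, gen2]
  · left; simp [lmap, gen2]

theorem fin2_cases (i : Fin 2) : i = 0 ∨ i = 1 := by omega

end Nielsen

namespace Nielsen
open FreeGroup List Subgroup

theorem norm_mul_inv_pair (x y : F2) : (x * y).norm = (y⁻¹ * x⁻¹).norm := by
  rw [← FreeGroup.norm_inv_eq (x := x * y), mul_inv_rev]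

theorem hmix_of_tests {u v : F2}
    (h1 : max u.norm v.norm ≤ (v*u).norm) (h2 : max u.norm v.norm ≤ (v*u⁻¹).norm)
    (h3 : max u.norm v.norm ≤ (u*v).norm) (h4 : max u.norm v.norm ≤ (u⁻¹*v).norm) :
    ∀ z z' : Lt, z.1 ≠ z'.1 →
      max (lmap u v z).norm (lmap u v z').norm ≤ ((lmap u v z) * (lmap u v z')).norm := by
  intro z z' hb
  rcases fin2_cases z.1 with hz | hz <;> rcases fin2_cases z'.1 with hz' | hz'
  · exact absurd (hz.trans hz'.symm) hb
  · rcases lmap_fst_zero (u := u) (v := v) hz with e | e <;>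
      rcases lmap_fst_one (u := u) (v := v) hz' with e' | e' <;> rw [e, e']
    · simpa using h3
    · have he : (u * v⁻¹).norm = (v * u⁻¹).norm := by
        rw [norm_mul_inv_pair u v⁻¹]; simp
      rw [he]
      simpa [FreeGroup.norm_inv_eq] using h2
    · simpa [FreeGroup.norm_inv_eq] using h4
    · have he : (u⁻¹ * v⁻¹).norm = (v * u).norm := by
        rw [norm_mul_inv_pair u⁻¹ v⁻¹]; simp
      rw [he]
      simpa [FreeGroup.norm_inv_eq] using h1
  · rcases lmap_fst_one (u := u) (v := v) hz with e | e <;>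
      rcases lmap_fst_zero (u := u) (v := v) hz' with e' | e' <;> rw [e, e']
    · rw [max_comm]
      simpa using h1
    · rw [max_comm]
      simpa [FreeGroup.norm_inv_eq] using h2
    · have he : (v⁻¹ * u).norm = (u⁻¹ * v).norm := by
        rw [norm_mul_inv_pair v⁻¹ u]; simp
      rw [he, max_comm]
      simpa [FreeGroup.norm_inv_eq] using h4
    · have he : (v⁻¹ * u⁻¹).norm = (u * v).norm := by
        rw [norm_mul_inv_pair v⁻¹ u⁻¹]; simp
      rw [he, max_comm]
      simpa [FreeGroup.norm_inv_eq] using h3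
  · exact absurd (hz.trans hz'.symm) hb

theorem main_induction : ∀ (N Wb : ℕ) (u v : F2), u.norm + v.norm ≤ N → wt u + wt v ≤ Wb →
    Subgroup.closure ({u, v} : Set F2) = ⊤ → Good ⁅u, v⁆ := by
  intro N
  induction N using Nat.strong_induction_on with
  | _ N ihN =>
  intro Wb
  induction Wb using Nat.strong_induction_on with
  | _ Wb ihW =>
  intro u v hN hW hcl
  obtain ⟨hu1, hv1⟩ := ne_one_of_closure hcl
  by_cases hA :
      ((v*u).norm < v.norm ∨ (v*u⁻¹).norm < v.norm ∨ (u*v).norm < v.norm ∨ (u⁻¹*v).norm < v.norm)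
      ∨ ((u*v).norm < u.norm ∨ (u*v⁻¹).norm < u.norm ∨ (v*u).norm < u.norm ∨ (v⁻¹*u).norm < u.norm)
  · -- a norm-decreasing move exists
    have step : ∀ w : F2, VMove u v w → w.norm < v.norm → Good ⁅u, v⁆ := by
      intro w mv hlt
      have hcl' : Subgroup.closure ({u, w} : Set F2) = ⊤ := by
        rw [vmove_closure mv]; exact hcl
      have hg : Good ⁅u, w⁆ :=
        ihN (u.norm + w.norm) (by omega) (wt u + wt w) u w le_rfl le_rfl hcl'
      exact vmove_good mv hg
    have stepu : ∀ w : F2, VMove v u w → w.norm < u.norm → Good ⁅u, v⁆ := by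
      intro w mv hlt
      have hcl' : Subgroup.closure ({v, w} : Set F2) = ⊤ := by
        rw [vmove_closure mv, closure_pair_swap]; exact hcl
      have hg : Good ⁅v, w⁆ :=
        ihN (v.norm + w.norm) (by omega) (wt v + wt w) v w le_rfl le_rfl hcl'
      exact good_comm_swap (vmove_good mv hg)
    rcases hA with (h | h | h | h) | (h | h | h | h)
    · exact step _ (Or.inl rfl) h
    · exact step _ (Or.inr (Or.inl rfl)) h
    · exact step _ (Or.inr (Or.inr (Or.inl rfl))) h
    · exact step _ (Or.inr (Or.inr (Or.inr rfl))) h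
    · exact stepu _ (Or.inl rfl) h
    · exact stepu _ (Or.inr (Or.inl rfl)) h
    · exact stepu _ (Or.inr (Or.inr (Or.inl rfl))) h
    · exact stepu _ (Or.inr (Or.inr (Or.inr rfl))) h
  · push_neg at hA
    obtain ⟨⟨a1, a2, a3, a4⟩, b1, b2, b3, b4⟩ := hA
    have e2 : (v*u⁻¹).norm = (u*v⁻¹).norm := by
      rw [norm_mul_inv_pair v u⁻¹]; simp
    have e4 : (u⁻¹*v).norm = (v⁻¹*u).norm := by
      rw [norm_mul_inv_pair u⁻¹ v]; simp
    have h1 : max u.norm v.norm ≤ (v*u).norm := max_le b3 a1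
    have h2 : max u.norm v.norm ≤ (v*u⁻¹).norm := max_le (e2 ▸ b2) a2
    have h3 : max u.norm v.norm ≤ (u*v).norm := max_le b1 a3
    have h4 : max u.norm v.norm ≤ (u⁻¹*v).norm := max_le (e4 ▸ b4) a4
    have Hmix := hmix_of_tests h1 h2 h3 h4
    by_cases hHH : ∀ z z' z'' : Lt, z.1 ≠ z'.1 → z''.1 ≠ z'.1 →
        Dd (lmap u v z) (lmap u v z') + Dd (lmap u v z') (lmap u v z'') < 2 * (lmap u v z').norm
    · -- Nielsen reduced: generators must be letters
      have hrange : ∀ t : F2, ∃ g : F2, FreeGroup.lift (gen2 u v) g = t := by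
        intro t
        have hle : Subgroup.closure ({u, v} : Set F2) ≤ (FreeGroup.lift (gen2 u v)).range := by
          rw [closure_le]
          rintro x (rfl | rfl)
          · exact ⟨FreeGroup.of 0, by rw [FreeGroup.lift_apply_of]; simp [gen2]⟩
          · exact ⟨FreeGroup.of 1, by rw [FreeGroup.lift_apply_of]; simp [gen2]⟩
        exact hle (hcl ▸ Subgroup.mem_top t)
      obtain ⟨g0, hg0⟩ := hrange (FreeGroup.of 0)
      obtain ⟨g1, hg1⟩ := hrange (FreeGroup.of 1)
      obtain ⟨z0, hz0⟩ := letter_of_norm_one hu1 hv1 Hmix hHH (FreeGroup.norm_of 0) g0 hg0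
      obtain ⟨z1, hz1⟩ := letter_of_norm_one hu1 hv1 Hmix hHH (FreeGroup.norm_of 1) g1 hg1
      have getu : ∀ (z : Lt) (t : F2), z.1 = 0 → lmap u v z = t → u = t ∨ u = t⁻¹ := by
        intro z t hb he
        rcases lmap_fst_zero (u := u) (v := v) hb with e | e
        · exact Or.inl (e.symm.trans he)
        · right
          have : u⁻¹ = t := e.symm.trans he
          rw [← this, inv_inv]
      have getv : ∀ (z : Lt) (t : F2), z.1 = 1 → lmap u v z = t → v = t ∨ v = t⁻¹ := by
        intro z t hb he
        rcases lmap_fst_one (u := u) (v := v) hb with e | e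
        · exact Or.inl (e.symm.trans he)
        · right
          have : v⁻¹ = t := e.symm.trans he
          rw [← this, inv_inv]
      rcases fin2_cases z0.1 with hb0 | hb0 <;> rcases fin2_cases z1.1 with hb1 | hb1
      · exfalso
        rcases getu z0 _ hb0 hz0 with h | h <;> rcases getu z1 _ hb1 hz1 with h' | h' <;>
          rw [h] at h' <;> revert h' <;> decide
      · exact base_good (getu z0 _ hb0 hz0) (getv z1 _ hb1 hz1)
      · exact good_comm_swap (base_good (getv z0 _ hb0 hz0) (getu z1 _ hb1 hz1))
      · exfalso
        rcases getv z0 _ hb0 hz0 with h | h <;> rcases getv z1 _ hb1 hz1 with h' | h' <;>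
          rw [h] at h' <;> revert h' <;> decide
    · -- exact-half configuration : weight-decreasing move
      push_neg at hHH
      obtain ⟨z, z', z'', hbz, hbz'', hge⟩ := hHH
      have hd2' : z'.1 ≠ z''.1 := fun h => hbz'' h.symm
      have hd1 := mixed_Dd hu1 hv1 Hmix (z := z) (z' := z') hbz
      have hd2 := mixed_Dd hu1 hv1 Hmix (z := z') (z' := z'') hd2'
      rw [Nat.le_min] at hd1 hd2
      have hDX : Dd (lmap u v z) (lmap u v z') = (lmap u v z').norm := by omega
      have hDZ : Dd (lmap u v z') (lmap u v z'') = (lmap u v z').norm := by omega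
      have hXn : (lmap u v z').norm ≤ (lmap u v z).norm := by omega
      have hZn : (lmap u v z').norm ≤ (lmap u v z'').norm := by omega
      rcases fin2_cases z'.1 with hb | hb
      · -- middle letter comes from u; replace v
        have hzv : z.1 = 1 := by
          rcases fin2_cases z.1 with h | h
          · exact absurd (h.trans hb.symm) hbz
          · exact h
        have hzv'' : z''.1 = 1 := by
          rcases fin2_cases z''.1 with h | h
          · exact absurd (h.trans hb.symm) hbz''
          · exact h
        obtain ⟨d', mv, hnorm, hwt⟩ := exact_half_move hu1 (lmap u v z') (lmap u v z)
          (lmap u v z'') (lmap_fst_zero hb) (lmap_fst_one hzv) (lmap_fst_one hzv'') hDX hDZ hXn hZn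
        have hcl' : Subgroup.closure ({u, d'} : Set F2) = ⊤ := by
          rw [vmove_closure mv]; exact hcl
        have hg : Good ⁅u, d'⁆ :=
          ihW (wt u + wt d') (by omega) u d' (by omega) le_rfl hcl'
        exact vmove_good mv hg
      · -- middle letter comes from v; replace u
        have hzv : z.1 = 0 := by
          rcases fin2_cases z.1 with h | h
          · exact h
          · exact absurd (h.trans hb.symm) hbz
        have hzv'' : z''.1 = 0 := by
          rcases fin2_cases z''.1 with h | h
          · exact h
          · exact absurd (h.trans hb.symm) hbz''
        obtain ⟨d', mv, hnorm, hwt⟩ := exact_half_move hv1 (lmap u v z') (lmap u v z)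
          (lmap u v z'') (lmap_fst_one hb) (lmap_fst_zero hzv) (lmap_fst_zero hzv'') hDX hDZ hXn hZn
        have hcl' : Subgroup.closure ({v, d'} : Set F2) = ⊤ := by
          rw [vmove_closure mv, closure_pair_swap]; exact hcl
        have hg : Good ⁅v, d'⁆ :=
          ihW (wt v + wt d') (by omega) v d' (by omega) le_rfl hcl'
        exact good_comm_swap (vmove_good mv hg)

end Nielsen

namespace Nielsen
open FreeGroup Subgroup

theorem closure_ab_top :
    Subgroup.closure ({FreeGroup.of 0, FreeGroup.of 1} : Set F2) = ⊤ := by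
  rw [eq_top_iff]
  intro x _
  have : ∀ y : F2, y ∈ Subgroup.closure ({FreeGroup.of 0, FreeGroup.of 1} : Set F2) := by
    intro y
    induction y using FreeGroup.induction_on with
    | C1 => exact one_mem _
    | of i =>
      rcases fin2_cases i with rfl | rfl
      · exact subset_closure (Or.inl rfl)
      · exact subset_closure (Or.inr rfl)
    | inv_of i h => exact inv_mem h
    | mul a b ha hb => exact mul_mem ha hb
  exact this x

end Nielsen

/-- Nielsen: every automorphism of the free group of rank 2 with basis `{a, b}` maps the
commutator `[a,b]` to a conjugate of `[a,b]` or of `[a,b]⁻¹`. -/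
theorem aut_commutator_conj (f : FreeGroup (Fin 2) ≃* FreeGroup (Fin 2)) :
    IsConj ⁅FreeGroup.of (0 : Fin 2), FreeGroup.of (1 : Fin 2)⁆
      (f ⁅FreeGroup.of (0 : Fin 2), FreeGroup.of (1 : Fin 2)⁆) ∨
    IsConj (⁅FreeGroup.of (0 : Fin 2), FreeGroup.of (1 : Fin 2)⁆)⁻¹
      (f ⁅FreeGroup.of (0 : Fin 2), FreeGroup.of (1 : Fin 2)⁆) := by
  set u := f (FreeGroup.of (0 : Fin 2)) with hu
  set v := f (FreeGroup.of (1 : Fin 2)) with hv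
  have hcl : Subgroup.closure ({u, v} : Set Nielsen.F2) = ⊤ := by
    have h1 : Subgroup.closure ({u, v} : Set Nielsen.F2)
        = Subgroup.map f.toMonoidHom
            (Subgroup.closure ({FreeGroup.of 0, FreeGroup.of 1} : Set Nielsen.F2)) := by
      rw [MonoidHom.map_closure]
      congr 1
      rw [Set.image_pair]
      rfl
    rw [h1, Nielsen.closure_ab_top]
    exact Subgroup.map_top_of_surjective _ f.surjective
  have hg : Nielsen.Good ⁅u, v⁆ :=
    Nielsen.main_induction (u.norm + v.norm) (Nielsen.wt u + Nielsen.wt v) u v le_rfl le_rfl hcl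
  have he : f ⁅FreeGroup.of (0 : Fin 2), FreeGroup.of (1 : Fin 2)⁆ = ⁅u, v⁆ :=
    map_commutatorElement f _ _
  rw [he]
  exact hg
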